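/- arXiv:0801.3605 — 2 statements merged into one kernel-verified Lean document; each statement's English description precedes it below -/
import Mathlib

section
/- Let f : ℂ → ℂ be a nonconstant entire function and let G ⊂ ℂ be a bounded domain (a nonempty bounded connected open set). Then f(G̃) ⊂ (f(G))~, i.e. the image under f of the union of G with the bounded components of ℂ \ G is contained in the union of f(G) with the bounded components of ℂ \ f(G). -/
open Set Filter Topology Metric Bornology Function
open scoped OnePoint

noncomputable section

namespace EscapingSmallGrowth

/-- The spherical (chordal) metric on the Riemann sphere `ℂ ∪ {∞}`. -/
def sphDist : OnePoint ℂ → OnePoint ℂ → ℝ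
  | (z : ℂ), (w : ℂ) =>
      2 * ‖z - w‖ /
        (Real.sqrt (1 + ‖z‖ ^ 2) * Real.sqrt (1 + ‖w‖ ^ 2))
  | (z : ℂ), ∞ => 2 / Real.sqrt (1 + ‖z‖ ^ 2)
  | ∞, (w : ℂ) => 2 / Real.sqrt (1 + ‖w‖ ^ 2)
  | ∞, ∞ => 0

/-- Locally uniform convergence on `U`, with respect to the spherical metric, of a
sequence of entire functions to a limit taking values in the Riemann sphere. -/
def SphLocUnifOn (U : Set ℂ) (g : ℕ → ℂ → ℂ) (φ : ℂ → OnePoint ℂ) : Prop :=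
  ∀ z ∈ U, ∃ V ∈ 𝓝 z,
    ∀ ε > (0:ℝ), ∃ N : ℕ, ∀ k ≥ N, ∀ w ∈ V ∩ U, sphDist ((g k w : ℂ) : OnePoint ℂ) (φ w) < ε

/-- The Fatou set: points with an open neighbourhood on which the family of iterates is
normal, i.e. every sequence of iterates has a subsequence converging locally uniformly
with respect to the spherical metric on the Riemann sphere. -/
def FatouSet (f : ℂ → ℂ) : Set ℂ :=
  {z | ∃ U, IsOpen U ∧ z ∈ U ∧
    ∀ n : ℕ → ℕ, ∃ k : ℕ → ℕ, StrictMono k ∧ ∃ φ : ℂ → OnePoint ℂ,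
      SphLocUnifOn U (fun j => f^[n (k j)]) φ}

/-- The Julia set. -/
def JuliaSet (f : ℂ → ℂ) : Set ℂ := (FatouSet f)ᶜ

/-- The escaping set `I(f)`. -/
def escapingSet (f : ℂ → ℂ) : Set ℂ :=
  {z | Tendsto (fun n : ℕ => ‖f^[n] z‖) atTop atTop}

/-- A transcendental entire function: holomorphic on all of `ℂ` and not a polynomial. -/
def TranscendentalEntire (f : ℂ → ℂ) : Prop :=
  Differentiable ℂ f ∧ ¬ ∃ p : Polynomial ℂ, ∀ z, f z = p.eval z

/-- `S̃`: the union of `S` with the bounded connected components of its complement. -/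
def fill (S : Set ℂ) : Set ℂ :=
  S ∪ {z | z ∉ S ∧ IsBounded (connectedComponentIn Sᶜ z)}

/-- The set `B_D(f)`. -/
def BD (f : ℂ → ℂ) (D : Set ℂ) : Set ℂ :=
  {z | ∀ n : ℕ, f^[n] z ∉ fill (f^[n] '' D)}

/-- The set `B(f)` (defined using a disc `D` meeting `J(f)`; it is independent of `D`). -/
def Bset (f : ℂ → ℂ) (D : Set ℂ) : Set ℂ :=
  {z | ∃ L : ℕ, ∀ n : ℕ, f^[n + L] z ∉ fill (f^[n] '' D)}

/-- `D` is an open disc. -/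
def IsOpenDisc (D : Set ℂ) : Prop := ∃ c : ℂ, ∃ r : ℝ, 0 < r ∧ D = Metric.ball c r

/-- `U` is a bounded domain: a nonempty bounded connected open subset of `ℂ`. -/
def IsBoundedDomain (U : Set ℂ) : Prop := IsOpen U ∧ IsConnected U ∧ IsBounded U

/-- The maximum modulus `M(r,f)`. -/
def maxMod (f : ℂ → ℂ) (r : ℝ) : ℝ :=
  sSup ((fun z => ‖f z‖) '' Metric.sphere (0:ℂ) r)

/-- The minimum modulus `m(r,f)`. -/
def minMod (f : ℂ → ℂ) (r : ℝ) : ℝ :=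
  sInf ((fun z => ‖f z‖) '' Metric.sphere (0:ℂ) r)

/-- A Jordan curve: the image of a continuous injective map from the circle to `ℂ`. -/
def IsJordanCurve (γ : Set ℂ) : Prop :=
  ∃ φ : Metric.sphere (0:ℂ) 1 → ℂ, Continuous φ ∧ Function.Injective φ ∧ γ = Set.range φ

/-- `γ` surrounds `S` if `S` is contained in a bounded connected component of `γᶜ`. -/
def Surrounds (γ S : Set ℂ) : Prop :=
  ∃ z, z ∉ γ ∧ IsBounded (connectedComponentIn γᶜ z) ∧ S ⊆ connectedComponentIn γᶜ z

/-- The inside of a curve: the union of the bounded components of its complement. -/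
def insideOf (γ : Set ℂ) : Set ℂ :=
  {z | z ∉ γ ∧ IsBounded (connectedComponentIn γᶜ z)}


/-- **Šura-Bura**: in a compact Hausdorff space, a connected component contained in an open
set admits a clopen set squeezed in between. -/
lemma exists_isClopen_subset {X : Type*} [TopologicalSpace X] [T2Space X] [CompactSpace X]
    (x : X) {U : Set X} (hU : IsOpen U) (hcU : connectedComponent x ⊆ U) :
    ∃ A : Set X, IsClopen A ∧ connectedComponent x ⊆ A ∧ A ⊆ U := by
  have h1 : Uᶜ ∩ ⋂ s : {s : Set X // IsClopen s ∧ x ∈ s}, (s : Set X) = ∅ := by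
    rw [← connectedComponent_eq_iInter_isClopen, Set.eq_empty_iff_forall_notMem]
    rintro y ⟨hy1, hy2⟩
    exact hy1 (hcU hy2)
  obtain ⟨t, ht⟩ := (hU.isClosed_compl.isCompact).elim_finite_subfamily_closed
    (fun s : {s : Set X // IsClopen s ∧ x ∈ s} => (s : Set X)) (fun s => s.2.1.1) h1
  refine ⟨⋂ s ∈ t, (s : Set X), isClopen_biInter_finset (fun s _ => s.2.1), ?_, ?_⟩
  · exact subset_iInter₂ fun s _ => s.2.1.connectedComponent_subset s.2.2
  · intro y hy
    by_contra hyU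
    exact (Set.eq_empty_iff_forall_notMem.mp ht y) ⟨hyU, hy⟩

/-- For a nonconstant entire function `f` and a bounded domain `G`,
`f(G̃) ⊆ (f(G))~`. -/
theorem image_fill_subset_fill_image
    (f : ℂ → ℂ) (hf : Differentiable ℂ f) (hnc : ¬ ∃ c : ℂ, f = fun _ => c)
    (G : Set ℂ) (hG : IsBoundedDomain G) :
    f '' fill G ⊆ fill (f '' G) := by
  obtain ⟨hGopen, hGconn, hGbdd⟩ := hG
  -- the open mapping theorem
  have hAn : AnalyticOnNhd ℂ f univ := Complex.analyticOnNhd_univ_iff_differentiable.mpr hf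
  have hopen : ∀ s : Set ℂ, IsOpen s → IsOpen (f '' s) := by
    rcases hAn.is_constant_or_isOpen isPreconnected_univ with ⟨c, hc⟩ | h
    · exact absurd ⟨c, funext fun z => hc z (mem_univ z)⟩ hnc
    · exact fun s hs => h s (subset_univ s) hs
  rintro y ⟨w, hw, rfl⟩
  rcases hw with hwG | ⟨hwG, hK⟩
  · exact Or.inl ⟨w, hwG, rfl⟩
  by_cases hfw : f w ∈ f '' G
  · exact Or.inl hfw
  -- `K` : the bounded complementary component containing `w`
  set K := connectedComponentIn Gᶜ w with hKdef
  have hwK : w ∈ K := mem_connectedComponentIn hwG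
  obtain ⟨r, hr⟩ := (hGbdd.union hK).subset_ball (0 : ℂ)
  set R : ℝ := max r 0 + 1 with hRdef
  have hR1 : 1 ≤ R := le_add_of_nonneg_left (le_max_right r 0)
  have hrR : r ≤ R - 1 := by simp [hRdef]
  have hGsub : G ⊆ ball (0 : ℂ) (R - 1) :=
    fun z hz => (ball_subset_ball hrR) (hr (mem_union_left _ hz))
  have hKsub : K ⊆ ball (0 : ℂ) (R - 1) :=
    fun z hz => (ball_subset_ball hrR) (hr (mem_union_right _ hz))
  -- the compact space `Y`
  set Y : Set ℂ := Gᶜ ∩ closedBall 0 R with hYdef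
  have hYcompact : IsCompact Y := (isCompact_closedBall (0:ℂ) R).inter_left hGopen.isClosed_compl
  have hwY : w ∈ Y := ⟨hwG, closedBall_subset_closedBall (by linarith)
    (ball_subset_closedBall (hKsub hwK))⟩
  haveI : CompactSpace Y := isCompact_iff_compactSpace.mp hYcompact
  set wX : Y := ⟨w, hwY⟩ with hwXdef
  -- the connected component of `w` in `Y` is contained in `K`
  have hcomp : connectedComponent wX ⊆ (Subtype.val ⁻¹' (ball (0:ℂ) (R-1)) : Set Y) := by
    intro y hy
    have himg : (Subtype.val '' connectedComponent wX : Set ℂ) ⊆ K := by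
      apply IsPreconnected.subset_connectedComponentIn
      · exact isPreconnected_connectedComponent.image _ continuous_subtype_val.continuousOn
      · exact ⟨wX, mem_connectedComponent, rfl⟩
      · rintro z ⟨u, _, rfl⟩; exact u.2.1
    exact hKsub (himg ⟨y, hy, rfl⟩)
  obtain ⟨A, hAclopen, hA1, hA2⟩ :=
    exists_isClopen_subset wX (isOpen_ball.preimage continuous_subtype_val) hcomp
  set A' : Set ℂ := Subtype.val '' A with hA'def
  set B' : Set ℂ := Subtype.val '' Aᶜ with hB'def
  have hA'compact : IsCompact A' := (hAclopen.isClosed.isCompact).image continuous_subtype_val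
  have hB'compact : IsCompact B' := (hAclopen.compl.isClosed.isCompact).image continuous_subtype_val
  have hA'sub : A' ⊆ ball (0:ℂ) (R-1) := by rintro _ ⟨u, hu, rfl⟩; exact hA2 hu
  have hwA' : w ∈ A' := ⟨wX, hA1 mem_connectedComponent, rfl⟩
  have hA'ne : A'.Nonempty := ⟨w, hwA'⟩
  have hYunion : Y = A' ∪ B' := by
    rw [hA'def, hB'def, ← image_union, union_compl_self, image_univ, Subtype.range_coe]
  -- `B'` is nonempty
  have hB'ne : B'.Nonempty := by
    have hRY : (R : ℂ) ∈ Y := by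
      constructor
      · intro hRG
        have h2 := hGsub hRG
        rw [mem_ball, dist_zero_right, Complex.norm_real, Real.norm_eq_abs,
          abs_of_nonneg (by linarith)] at h2
        linarith
      · rw [mem_closedBall, dist_zero_right, Complex.norm_real, Real.norm_eq_abs,
          abs_of_nonneg (by linarith)]
    rcases (hYunion ▸ hRY) with h | h
    · have h2 := hA'sub h
      rw [mem_ball, dist_zero_right, Complex.norm_real, Real.norm_eq_abs,
        abs_of_nonneg (by linarith)] at h2
      linarith
    · exact ⟨_, h⟩
  -- positive distance between `B'` and `A'`
  obtain ⟨p₀, hp₀B, hp₀min'⟩ :=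
    hB'compact.exists_isMinOn hB'ne (continuous_infDist_pt A').continuousOn
  have hp₀min : ∀ q ∈ B', infDist p₀ A' ≤ infDist q A' := fun q hq => hp₀min' hq
  have hp₀A : p₀ ∉ A' := by
    rintro hpA
    obtain ⟨u, hu, huv⟩ := hp₀B
    obtain ⟨v, hv, hvv⟩ := hpA
    rw [← hvv] at huv
    exact hu (Subtype.val_injective huv ▸ hv)
  have hm : 0 < infDist p₀ A' := (hA'compact.isClosed.notMem_iff_infDist_pos hA'ne).mp hp₀A
  set δ : ℝ := min (infDist p₀ A' / 2) (1/2) with hδdef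
  have hδpos : 0 < δ := lt_min (by linarith) (by norm_num)
  have hδlt : δ < infDist p₀ A' := (min_le_left _ _).trans_lt (by linarith)
  have hδhalf : δ ≤ 1/2 := min_le_right _ _
  -- the open bounded set `L` with `frontier L ⊆ G`
  set L : Set ℂ := {p : ℂ | infDist p A' < δ} with hLdef
  have hLopen : IsOpen L := isOpen_lt (continuous_infDist_pt A') continuous_const
  have hwL : w ∈ L := by
    have : infDist w A' = 0 := infDist_zero_of_mem hwA'
    simpa [hLdef, this] using hδpos
  have hLsub : L ⊆ ball (0:ℂ) R := by
    intro p hp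
    obtain ⟨a, ha, hpa⟩ := (infDist_lt_iff hA'ne).mp hp
    have h2 := hA'sub ha
    rw [mem_ball, dist_zero_right] at h2 ⊢
    calc ‖p‖ ≤ dist p a + ‖a‖ := by
          simpa [dist_zero_right] using dist_triangle p a 0
      _ < δ + (R - 1) := by linarith
      _ ≤ R := by linarith
  have hclosL : IsCompact (closure L) := ((isBounded_ball).subset hLsub).isCompact_closure
  have hfrontL : frontier L ⊆ G := by
    intro p hp
    rw [hLopen.frontier_eq] at hp
    obtain ⟨hp1, hp2⟩ := hp
    have hpd : infDist p A' = δ := by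
      have h1 : p ∈ {q : ℂ | infDist q A' ≤ δ} :=
        closure_lt_subset_le (continuous_infDist_pt A') continuous_const hp1
      exact le_antisymm h1 (not_lt.mp hp2)
    by_contra hpG
    have hpY : p ∈ Y := by
      refine ⟨hpG, ?_⟩
      have : infDist p A' < 2 * δ := by rw [hpd]; linarith
      obtain ⟨a, ha, hpa⟩ := (infDist_lt_iff hA'ne).mp this
      have h2 := hA'sub ha
      rw [mem_ball, dist_zero_right] at h2
      rw [mem_closedBall, dist_zero_right]
      calc ‖p‖ ≤ dist p a + ‖a‖ := by
            simpa [dist_zero_right] using dist_triangle p a 0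
        _ ≤ 2 * δ + (R - 1) := by linarith
        _ ≤ R := by linarith
    rcases (hYunion ▸ hpY) with h | h
    · rw [infDist_zero_of_mem h] at hpd; linarith
    · have := hp₀min p h; linarith
  -- the image side
  have hVLopen : IsOpen (f '' L) := hopen L hLopen
  have hFLcompact : IsCompact (f '' closure L) := hclosL.image hf.continuous
  have hclosVL : closure (f '' L) ⊆ f '' L ∪ f '' frontier L := by
    have h1 : closure (f '' L) ⊆ f '' closure L :=
      closure_minimal (image_mono subset_closure) hFLcompact.isClosed
    refine h1.trans ?_
    rw [← image_union]
    apply image_mono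
    intro z hz
    by_cases hzL : z ∈ L
    · exact Or.inl hzL
    · exact Or.inr (by rw [hLopen.frontier_eq]; exact ⟨hz, hzL⟩)
  have hΓG : f '' frontier L ⊆ f '' G := image_mono hfrontL
  have hxΓ : f w ∉ f '' frontier L := fun h => hfw (hΓG h)
  have hfwVL : f w ∈ f '' L := ⟨w, hwL, rfl⟩
  -- the component of `f w` in the complement of `f '' frontier L` is inside `f '' L`
  have hOVL : connectedComponentIn (f '' frontier L)ᶜ (f w) ⊆ f '' L := by
    have hsub : connectedComponentIn (f '' frontier L)ᶜ (f w) ⊆ f '' L ∪ (closure (f '' L))ᶜ := by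
      intro a ha
      have haΓ : a ∉ f '' frontier L := connectedComponentIn_subset _ _ ha
      by_cases hc : a ∈ closure (f '' L)
      · rcases hclosVL hc with h | h
        · exact Or.inl h
        · exact absurd h haΓ
      · exact Or.inr hc
    rcases IsPreconnected.subset_or_subset hVLopen isClosed_closure.isOpen_compl
      (disjoint_compl_right.mono_left subset_closure) hsub
      isPreconnected_connectedComponentIn with h | h
    · exact h
    · exact absurd (subset_closure hfwVL) (h (mem_connectedComponentIn hxΓ))
  right
  refine ⟨hfw, ?_⟩
  have hfwc : f w ∈ (f '' frontier L)ᶜ := hxΓ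
  have hC : connectedComponentIn (f '' G)ᶜ (f w) ⊆ connectedComponentIn (f '' frontier L)ᶜ (f w) :=
    IsPreconnected.subset_connectedComponentIn
      (isPreconnected_connectedComponentIn (F := (f '' G)ᶜ) (x := f w))
      (mem_connectedComponentIn (show f w ∈ (f '' G)ᶜ from hfw))
      ((connectedComponentIn_subset _ _).trans (compl_subset_compl.mpr hΓG))
  exact hFLcompact.isBounded.subset
    ((hC.trans hOVL).trans (image_mono subset_closure))


end EscapingSmallGrowth
end
end

section
/- Let f be a transcendental entire function, let D be an open disc with D ∩ J(f) ≠ ∅, and for n ∈ ℕ let V_n denote the connected component of f^{-n}((f^n(D))~) that contains D. Then V_n ⊂ V_{n+1} for every n ∈ ℕ. -/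
open Set Filter Topology Metric Bornology Function
open scoped OnePoint

noncomputable section

namespace EscapingSmallGrowth

/-! ### Auxiliary lemmas for `component_preimage_mono` -/

section Aux

/-- The set of points of norm `> R` in `ℂ`. -/
private def bigSet (R : ℝ) : Set ℂ := {z : ℂ | R < ‖z‖}

private lemma isPreconnected_bigSet {R : ℝ} (hR : 0 ≤ R) : IsPreconnected (bigSet R) := by
  have h1 : IsConnected ((Set.Ioi R) ×ˢ (Metric.sphere (0:ℂ) 1)) := by
    refine IsConnected.prod ⟨⟨R+1, by simp⟩, isPreconnected_Ioi⟩ ?_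
    exact isConnected_sphere (by rw [Complex.rank_real_complex]; norm_num) 0 zero_le_one
  have h2 : IsConnected ((fun p : ℝ × ℂ => p.1 • p.2) '' ((Set.Ioi R) ×ˢ (Metric.sphere (0:ℂ) 1))) :=
    h1.image _ (continuous_fst.smul continuous_snd).continuousOn
  have h3 : (fun p : ℝ × ℂ => p.1 • p.2) '' ((Set.Ioi R) ×ˢ (Metric.sphere (0:ℂ) 1)) = bigSet R := by
    ext z
    constructor
    · rintro ⟨⟨t, v⟩, ⟨ht, hv⟩, rfl⟩
      have hv1 : ‖v‖ = 1 := by simpa using hv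
      have ht' : R < t := ht
      have : ‖t • v‖ = |t| * ‖v‖ := norm_smul t v
      simp only [bigSet, Set.mem_setOf_eq, this, hv1, mul_one]
      rw [abs_of_pos (lt_of_le_of_lt hR ht')]
      exact ht'
    · intro hz
      have hz0 : z ≠ 0 := by
        intro h; rw [h] at hz; simp [bigSet] at hz; linarith [hz]
      refine ⟨⟨‖z‖, ‖z‖⁻¹ • z⟩, ⟨hz, ?_⟩, ?_⟩
      · have habs : (1:ℝ)⁻¹ = 1 := inv_one
        have hne : ‖z‖ ≠ 0 := norm_ne_zero_iff.mpr hz0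
        simp only [mem_sphere_iff_norm, sub_zero, norm_smul, norm_inv, norm_norm]
        exact inv_mul_cancel₀ hne
      · simp only [smul_smul]
        rw [mul_inv_cancel₀ (norm_ne_zero_iff.mpr hz0), one_smul]
  rw [← h3]
  exact h2.isPreconnected

private lemma not_isBounded_bigSet {R : ℝ} (hR : 0 ≤ R) : ¬ IsBounded (bigSet R) := by
  intro h
  obtain ⟨M, hM⟩ := h.subset_ball 0
  set w : ℂ := (((max M R) + 1 : ℝ) : ℂ)
  have hw : w ∈ bigSet R := by
    have : ‖w‖ = max M R + 1 := by
      rw [Complex.norm_real]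
      refine Real.norm_of_nonneg ?_
      have := le_trans hR (le_max_right M R)
      linarith
    simp only [bigSet, Set.mem_setOf_eq, this]
    have := le_max_right M R
    linarith
  have := hM hw
  rw [Metric.mem_ball, dist_zero_right] at this
  have hn : ‖w‖ = max M R + 1 := by
    rw [Complex.norm_real]
    refine Real.norm_of_nonneg ?_
    have := le_trans hR (le_max_right M R)
    linarith
  rw [hn] at this
  have := le_max_left M R
  linarith

/-- A preconnected set avoiding the frontier of an open set and meeting it lies inside it. -/
private lemma preconn_subset_of_frontier {C U : Set ℂ} (hC : IsPreconnected C)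
    (hU : IsOpen U) (hd : ∀ z ∈ C, z ∉ frontier U) (hne : (C ∩ U).Nonempty) : C ⊆ U := by
  have hsub : C ⊆ U ∪ (closure U)ᶜ := by
    intro z hz
    by_cases h : z ∈ closure U
    · left
      by_contra hzU
      exact hd z hz ⟨h, by rwa [hU.interior_eq]⟩
    · right; exact h
  exact hC.subset_left_of_subset_union hU isClosed_closure.isOpen_compl
    (disjoint_compl_right.mono_left subset_closure) hsub hne

private lemma mem_fill_of_mem {S : Set ℂ} {z : ℂ} (h : z ∈ S) : z ∈ fill S := Or.inl h

private lemma fill_isBounded {S : Set ℂ} (hS : IsBounded S) : IsBounded (fill S) := by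
  obtain ⟨r, hr⟩ := hS.subset_ball 0
  set R := |r| + 1 with hRdef
  have hR0 : (0:ℝ) ≤ R := by positivity
  have hSR : S ⊆ Metric.ball 0 R := hr.trans (Metric.ball_subset_ball (by
    have := abs_nonneg r; have := le_abs_self r; simp only [hRdef]; linarith))
  have : fill S ⊆ Metric.closedBall 0 R := by
    intro z hz
    by_contra hzB
    rw [Metric.mem_closedBall, dist_zero_right, not_le] at hzB
    have hzS : z ∉ S := fun h => by
      have := hSR h; rw [Metric.mem_ball, dist_zero_right] at this; linarith
    rcases hz with h | ⟨-, hb⟩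
    · exact hzS h
    · have hsub : bigSet R ⊆ connectedComponentIn Sᶜ z := by
        refine (isPreconnected_bigSet hR0).subset_connectedComponentIn hzB ?_
        intro w hw hwS
        have := hSR hwS; rw [Metric.mem_ball, dist_zero_right] at this
        exact absurd this (not_lt.mpr hw.le)
      exact not_isBounded_bigSet hR0 (hb.subset hsub)
  exact (Metric.isBounded_closedBall).subset this

/-- Key surrounding lemma: a point whose component in `Xᶜ` is bounded admits an open bounded
neighbourhood whose frontier lies in `X`. -/
private lemma exists_surround {X : Set ℂ} (hXo : IsOpen X) (hXb : IsBounded X) {x : ℂ}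
    (hx : x ∉ X) (hK : IsBounded (connectedComponentIn Xᶜ x)) :
    ∃ U : Set ℂ, IsOpen U ∧ IsBounded U ∧ x ∈ U ∧ frontier U ⊆ X := by
  set K := connectedComponentIn Xᶜ x with hKdef
  obtain ⟨R, hR0, hRX, hRK⟩ : ∃ R : ℝ, 0 < R ∧ X ⊆ Metric.ball 0 R ∧ K ⊆ Metric.ball 0 R := by
    obtain ⟨r1, h1⟩ := hXb.subset_ball 0
    obtain ⟨r2, h2⟩ := hK.subset_ball 0
    refine ⟨|r1| + |r2| + 1, by positivity, ?_, ?_⟩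
    · exact h1.trans (Metric.ball_subset_ball (by have := abs_nonneg r2; have := le_abs_self r1; linarith))
    · exact h2.trans (Metric.ball_subset_ball (by have := abs_nonneg r1; have := le_abs_self r2; linarith))
  set Y : Set ℂ := Xᶜ ∩ Metric.closedBall 0 R with hYdef
  have hYclosed : IsClosed Y := hXo.isClosed_compl.inter Metric.isClosed_closedBall
  have hYc : IsCompact Y := (isCompact_closedBall (0:ℂ) R).of_isClosed_subset hYclosed
    Set.inter_subset_right
  have hxK : x ∈ K := mem_connectedComponentIn hx
  have hxY : x ∈ Y := ⟨hx, Metric.ball_subset_closedBall (hRK hxK)⟩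
  have hKY : K ⊆ connectedComponentIn Y x := by
    refine (isPreconnected_connectedComponentIn).subset_connectedComponentIn hxK ?_
    intro w hw
    exact ⟨connectedComponentIn_subset _ _ hw, Metric.ball_subset_closedBall (hRK hw)⟩
  haveI : CompactSpace Y := isCompact_iff_compactSpace.mp hYc
  set x' : Y := ⟨x, hxY⟩ with hx'def
  set Vh : Set Y := ((↑) : Y → ℂ) ⁻¹' (Metric.ball (0:ℂ) R) with hVhdef
  have hVo : IsOpen Vh := Metric.isOpen_ball.preimage continuous_subtype_val
  have hKV : connectedComponent x' ⊆ Vh := by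
    intro p hp
    have hpK : (p : ℂ) ∈ connectedComponentIn Y x := by
      rw [connectedComponentIn_eq_image hxY]
      exact ⟨p, hp, rfl⟩
    have hpXc : (p : ℂ) ∈ K := connectedComponentIn_mono x (Set.inter_subset_left) hpK
    exact hRK hpXc
  obtain ⟨Ph, hPhclopen, hxPh, hPhV⟩ : ∃ Ph : Set Y, IsClopen Ph ∧ x' ∈ Ph ∧ Ph ⊆ Vh := by
    have h1 := connectedComponent_eq_iInter_isClopen x'
    have hVcc : IsCompact (Vhᶜ : Set Y) := hVo.isClosed_compl.isCompact
    have h2 : (Vhᶜ ∩ ⋂ s : {s : Set Y // IsClopen s ∧ x' ∈ s}, (s : Set Y)) = ∅ := by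
      rw [← h1]
      rw [Set.eq_empty_iff_forall_notMem]
      rintro p ⟨hp1, hp2⟩
      exact hp1 (hKV hp2)
    obtain ⟨t, ht⟩ := hVcc.elim_finite_subfamily_closed _ (fun s => s.2.1.1) h2
    refine ⟨⋂ s ∈ t, (s : Set Y), isClopen_biInter_finset (fun s _ => s.2.1), ?_, ?_⟩
    · exact Set.mem_iInter₂.mpr fun s _ => s.2.2
    · intro p hp
      by_contra hpV
      rw [Set.eq_empty_iff_forall_notMem] at ht
      exact ht p ⟨hpV, hp⟩
  set P : Set ℂ := ((↑) : Y → ℂ) '' Ph with hPdef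
  have hPc : IsCompact P := (hPhclopen.1.isCompact).image continuous_subtype_val
  have hxP : x ∈ P := ⟨x', hxPh, rfl⟩
  have hPball : P ⊆ Metric.ball 0 R := by
    rintro p ⟨q, hq, rfl⟩
    exact hPhV hq
  set Q : Set ℂ := (((↑) : Y → ℂ) '' (Phᶜ : Set Y)) ∪ Metric.sphere 0 R with hQdef
  have hQc : IsCompact Q :=
    ((hPhclopen.2.isClosed_compl.isCompact).image continuous_subtype_val).union
      (isCompact_sphere 0 R)
  have hPQ : ∀ p ∈ P, p ∉ Q := by
    rintro p ⟨q, hq, rfl⟩ (⟨q', hq', he⟩ | hs)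
    · rw [Subtype.coe_injective he] at hq'
      exact hq' hq
    · have := hPball ⟨q, hq, rfl⟩
      rw [Metric.mem_ball] at this
      rw [Metric.mem_sphere] at hs
      exact absurd hs (ne_of_lt this)
  have hQne : Q.Nonempty := by
    obtain ⟨y, hy⟩ : (Metric.sphere (0:ℂ) R).Nonempty := NormedSpace.sphere_nonempty.mpr hR0.le
    exact ⟨y, Or.inr hy⟩
  obtain ⟨d, hd0, hdist⟩ : ∃ d > (0:ℝ), ∀ p ∈ P, ∀ q ∈ Q, d ≤ dist p q := by
    obtain ⟨p₀, hp₀P, hp₀min⟩ := hPc.exists_isMinOn ⟨x, hxP⟩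
      (Metric.continuous_infDist_pt Q).continuousOn
    have hp₀pos : 0 < Metric.infDist p₀ Q := by
      rw [← hQc.isClosed.notMem_iff_infDist_pos hQne]
      exact hPQ p₀ hp₀P
    exact ⟨_, hp₀pos, fun p hp q hq =>
      le_trans (hp₀min hp) (Metric.infDist_le_dist_of_mem hq)⟩
  set U : Set ℂ := {z | Metric.infDist z P < d/2} with hUdef
  have hUo : IsOpen U := isOpen_lt (Metric.continuous_infDist_pt P) continuous_const
  have hxU : x ∈ U := by
    simp only [hUdef, Set.mem_setOf_eq, Metric.infDist_zero_of_mem hxP]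
    positivity
  have hUb : IsBounded U := by
    refine (Metric.isBounded_ball (x := (0:ℂ)) (r := R + d/2)).subset ?_
    intro z hz
    obtain ⟨p, hpP, hpd⟩ := (Metric.infDist_lt_iff ⟨x, hxP⟩).mp hz
    have hp := hPball hpP
    rw [Metric.mem_ball, dist_zero_right] at hp ⊢
    calc ‖z‖ = dist z 0 := (dist_zero_right z).symm
    _ ≤ dist z p + dist p 0 := dist_triangle z p 0
    _ < d/2 + R := by rw [dist_zero_right]; exact add_lt_add hpd hp
    _ = R + d/2 := by ring
  refine ⟨U, hUo, hUb, hxU, ?_⟩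
  intro y hy
  have hyd : Metric.infDist y P = d/2 := by
    have h1 : y ∈ closure U := hy.1
    have h2 : Metric.infDist y P ≤ d/2 := by
      have := closure_lt_subset_le (f := fun z : ℂ => Metric.infDist z P)
        (g := fun _ : ℂ => d / 2) (Metric.continuous_infDist_pt P) continuous_const
      exact this h1
    have h3 : y ∉ U := by
      intro hyU
      exact (hUo.frontier_eq ▸ hy).2 hyU
    simp only [hUdef, Set.mem_setOf_eq, not_lt] at h3
    linarith
  by_contra hyX
  obtain ⟨p, hpP, hpd⟩ : ∃ p ∈ P, dist y p < d := by
    refine (Metric.infDist_lt_iff ⟨x, hxP⟩).mp ?_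
    rw [hyd]; linarith
  by_cases hyB : y ∈ Metric.closedBall (0:ℂ) R
  · have hyY : y ∈ Y := ⟨hyX, hyB⟩
    set y' : Y := ⟨y, hyY⟩
    by_cases hyP : y' ∈ Ph
    · have : y ∈ P := ⟨y', hyP, rfl⟩
      rw [Metric.infDist_zero_of_mem this] at hyd
      linarith
    · have hyQ : y ∈ Q := Or.inl ⟨y', hyP, rfl⟩
      have := hdist p hpP y hyQ
      rw [dist_comm] at this
      linarith
  · rw [Metric.mem_closedBall, dist_zero_right, not_le] at hyB
    have hpR : dist p 0 < R := by
      have := hPball hpP; rwa [Metric.mem_ball] at this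
    set γ : ℝ → ℂ := fun t => p + t • (y - p) with hγdef
    have hγc : Continuous fun t => dist (γ t) 0 := by
      apply Continuous.dist _ continuous_const
      exact continuous_const.add (continuous_id.smul continuous_const)
    have h0 : dist (γ 0) 0 = dist p 0 := by simp [hγdef]
    have h1 : dist (γ 1) 0 = ‖y‖ := by simp [hγdef, dist_zero_right]
    obtain ⟨t, ht, hts⟩ : ∃ t ∈ Set.Icc (0:ℝ) 1, dist (γ t) 0 = R := by
      have hIVT := intermediate_value_Icc (zero_le_one (α := ℝ)) hγc.continuousOn
      have hmem : R ∈ Set.Icc (dist (γ 0) 0) (dist (γ 1) 0) := by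
        rw [h0, h1]; exact ⟨hpR.le, hyB.le⟩
      obtain ⟨t, ht2, hts⟩ := hIVT hmem
      exact ⟨t, ht2, hts⟩
    have hsph : γ t ∈ Metric.sphere (0:ℂ) R := by rwa [Metric.mem_sphere]
    have hd1 : d ≤ dist p (γ t) := hdist p hpP _ (Or.inr hsph)
    have hd2 : dist p (γ t) ≤ dist p y := by
      have e1 : γ t - p = t • (y - p) := by simp [hγdef, add_sub_cancel_left]
      have e2 : dist p (γ t) = ‖t • (y - p)‖ := by
        rw [dist_comm, dist_eq_norm, e1]
      rw [e2, norm_smul]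
      have ht1 : ‖t‖ ≤ 1 := by
        rw [Real.norm_eq_abs, abs_of_nonneg ht.1]; exact ht.2
      calc ‖t‖ * ‖y - p‖ ≤ 1 * ‖y - p‖ :=
            mul_le_mul_of_nonneg_right ht1 (norm_nonneg _)
      _ = ‖y - p‖ := one_mul _
      _ = dist p y := by rw [dist_comm p y, dist_eq_norm]
    rw [dist_comm] at hpd
    linarith

end Aux

private lemma fill_isOpen {X : Set ℂ} (hXo : IsOpen X) (hXb : IsBounded X) :
    IsOpen (fill X) := by
  rw [isOpen_iff_forall_mem_open]
  intro z hz
  rcases hz with hzX | ⟨hzX, hzb⟩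
  · exact ⟨X, fun y hy => Or.inl hy, hXo, hzX⟩
  · obtain ⟨U, hUo, hUb, hzU, hfr⟩ := exists_surround hXo hXb hzX hzb
    refine ⟨U, ?_, hUo, hzU⟩
    intro y hy
    by_cases hyX : y ∈ X
    · exact Or.inl hyX
    · refine Or.inr ⟨hyX, ?_⟩
      have hsub : connectedComponentIn Xᶜ y ⊆ U := by
        refine preconn_subset_of_frontier isPreconnected_connectedComponentIn hUo ?_
          ⟨y, mem_connectedComponentIn hyX, hy⟩
        intro w hw hwf
        exact (connectedComponentIn_subset _ _ hw) (hfr hwf)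
      exact hUb.subset hsub

private lemma fill_iUnion_exhaust {Xk : ℕ → Set ℂ} (ho : ∀ k, IsOpen (Xk k))
    (hmono : ∀ k, Xk k ⊆ Xk (k + 1)) (hXb : IsBounded (⋃ k, Xk k)) {x : ℂ}
    (hx : x ∈ fill (⋃ k, Xk k)) : ∃ k, x ∈ fill (Xk k) := by
  have hmono' : ∀ i j, i ≤ j → Xk i ⊆ Xk j := by
    intro i j hij
    induction hij with
    | refl => exact Set.Subset.rfl
    | step h ih => exact ih.trans (hmono _)
  rcases hx with hxX | ⟨hxX, hxb⟩
  · obtain ⟨k, hk⟩ := Set.mem_iUnion.mp hxX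
    exact ⟨k, Or.inl hk⟩
  · have hXopen : IsOpen (⋃ k, Xk k) := isOpen_iUnion ho
    obtain ⟨U, hUo, hUb, hxU, hfr⟩ := exists_surround hXopen hXb hxX hxb
    have hfc : IsCompact (frontier U) :=
      hUb.isCompact_closure.of_isClosed_subset isClosed_frontier frontier_subset_closure
    obtain ⟨t, ht⟩ := hfc.elim_finite_subcover Xk ho hfr
    set N : ℕ := t.sup id with hN
    have hfrN : frontier U ⊆ Xk N := by
      intro w hw
      obtain ⟨i, hi⟩ := Set.mem_iUnion.mp (ht hw)
      simp only [Set.mem_iUnion, exists_prop] at hi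
      obtain ⟨hit, hwi⟩ := hi
      exact hmono' i N (Finset.le_sup (f := id) hit) hwi
    refine ⟨N, Or.inr ⟨fun h => hxX (Set.mem_iUnion.mpr ⟨N, h⟩), ?_⟩⟩
    have hxXN : x ∉ Xk N := fun h => hxX (Set.mem_iUnion.mpr ⟨N, h⟩)
    have hsub : connectedComponentIn (Xk N)ᶜ x ⊆ U := by
      refine preconn_subset_of_frontier isPreconnected_connectedComponentIn hUo ?_
        ⟨x, mem_connectedComponentIn hxXN, hxU⟩
      intro w hw hwf
      exact (connectedComponentIn_subset _ _ hw) (hfrN hwf)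
    exact hUb.subset hsub

/-- If `u` is in the closure of `fill X` but not in `fill X` (X open), then `u ∈ closure X`. -/
private lemma closure_fill_diff_subset {X : Set ℂ} (hXo : IsOpen X) :
    closure (fill X) \ fill X ⊆ closure X := by
  rintro u ⟨hu1, hu2⟩
  by_contra huc
  obtain ⟨ε, hε0, hεX⟩ : ∃ ε > (0:ℝ), Metric.ball u ε ∩ X = ∅ := by
    have : u ∈ (closure X)ᶜ := huc
    have ho : IsOpen (closure X)ᶜ := isClosed_closure.isOpen_compl
    obtain ⟨ε, hε0, hε⟩ := Metric.isOpen_iff.mp ho u this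
    refine ⟨ε, hε0, ?_⟩
    rw [Set.eq_empty_iff_forall_notMem]
    intro w ⟨hw1, hw2⟩
    exact (hε hw1) (subset_closure hw2)
  have huX : u ∉ X := fun h => by
    rw [Set.eq_empty_iff_forall_notMem] at hεX
    exact hεX u ⟨Metric.mem_ball_self hε0, h⟩
  have hub : ¬ IsBounded (connectedComponentIn Xᶜ u) := by
    intro hb
    exact hu2 (Or.inr ⟨huX, hb⟩)
  obtain ⟨w, hwf, hwb⟩ : ∃ w, w ∈ fill X ∧ w ∈ Metric.ball u ε := by
    obtain ⟨w, hw1, hw2⟩ := Metric.mem_closure_iff.mp hu1 ε hε0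
    exact ⟨w, hw1, by rwa [Metric.mem_ball, dist_comm]⟩
  have hballXc : Metric.ball u ε ⊆ Xᶜ := by
    intro v hv hvX
    rw [Set.eq_empty_iff_forall_notMem] at hεX
    exact hεX v ⟨hv, hvX⟩
  have hwX : w ∉ X := fun h => hballXc hwb h
  have hwbd : IsBounded (connectedComponentIn Xᶜ w) := by
    rcases hwf with h | ⟨-, hb⟩
    · exact absurd h hwX
    · exact hb
  have hball : Metric.ball u ε ⊆ connectedComponentIn Xᶜ w :=
    (convex_ball u ε).isPreconnected.subset_connectedComponentIn hwb hballXc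
  have heq : connectedComponentIn Xᶜ w = connectedComponentIn Xᶜ u :=
    connectedComponentIn_eq (hball (Metric.mem_ball_self hε0))
  rw [← heq] at hub
  exact hub hwbd

/-- Pushforward: if `g` maps `closure Ω \ Ω` into `T` and `g '' Ω` is open and `Ω` bounded,
then `g '' Ω ⊆ fill T`. -/
private lemma image_subset_fill {g : ℂ → ℂ} (hgc : Continuous g) {Ω T : Set ℂ}
    (hΩb : IsBounded Ω) (hgo : IsOpen (g '' Ω))
    (hbd : ∀ u ∈ closure Ω \ Ω, g u ∈ T) : g '' Ω ⊆ fill T := by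
  intro w hw
  by_cases hwT : w ∈ T
  · exact Or.inl hwT
  refine Or.inr ⟨hwT, ?_⟩
  have hcomp : IsCompact (g '' closure Ω) := hΩb.isCompact_closure.image hgc
  have hclos : closure (g '' Ω) ⊆ g '' closure Ω :=
    closure_minimal (Set.image_mono subset_closure) hcomp.isClosed
  have hsub : connectedComponentIn Tᶜ w ⊆ g '' Ω := by
    refine preconn_subset_of_frontier isPreconnected_connectedComponentIn hgo ?_
      ⟨w, mem_connectedComponentIn hwT, hw⟩
    intro z hzC hzF
    have hz1 : z ∈ closure (g '' Ω) := frontier_subset_closure hzF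
    obtain ⟨u, hu, rfl⟩ := hclos hz1
    by_cases huΩ : u ∈ Ω
    · exact ((hgo.frontier_eq ▸ hzF).2) ⟨u, huΩ, rfl⟩
    · exact (connectedComponentIn_subset _ _ hzC) (hbd u ⟨hu, huΩ⟩)
  exact (hcomp.isBounded.subset (hsub.trans (Set.image_mono subset_closure)))

/-- The components `V_n` of `f^{-n}((f^n(D))~)` containing `D`
satisfy `V_n ⊆ V_{n+1}`. -/
theorem component_preimage_mono
    (f : ℂ → ℂ) (hf : TranscendentalEntire f) (c₀ : ℂ) (r₀ : ℝ) (hr₀ : 0 < r₀)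
    (D : Set ℂ) (hD : D = Metric.ball c₀ r₀)
    (hDJ : (D ∩ JuliaSet f).Nonempty)
    (V : ℕ → Set ℂ)
    (hV : ∀ n : ℕ, V n = connectedComponentIn (f^[n] ⁻¹' fill (f^[n] '' D)) c₀) :
    ∀ n : ℕ, V n ⊆ V (n + 1) := by
  intro n
  have hdiff := hf.1
  have hcont : Continuous f := hdiff.continuous
  have hnc : ¬ ∃ w, ∀ z, f z = w := by
    rintro ⟨w, hw⟩
    exact hf.2 ⟨Polynomial.C w, fun z => by simp [hw z]⟩
  have hfo : IsOpenMap f := by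
    have han : AnalyticOnNhd ℂ f Set.univ :=
      hdiff.differentiableOn.analyticOnNhd isOpen_univ
    rcases han.is_constant_or_isOpen isPreconnected_univ with ⟨w, hw⟩ | h
    · exact absurd ⟨w, fun z => hw z (Set.mem_univ z)⟩ hnc
    · intro s hs
      exact h s (Set.subset_univ s) hs
  have hfno : ∀ m : ℕ, IsOpenMap f^[m] := by
    intro m
    induction m with
    | zero => simpa using IsOpenMap.id
    | succ k ih => rw [Function.iterate_succ]; exact ih.comp hfo
  set S : Set ℂ := f^[n] '' D with hS
  set T : Set ℂ := f^[n + 1] '' D with hT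
  set ρ : ℕ → ℝ := fun k => r₀ - r₀ / ((k : ℝ) + 2) with hρ
  have hρlt : ∀ k, ρ k < r₀ := by
    intro k
    have h1 : 0 < r₀ / ((k : ℝ) + 2) := by positivity
    simp only [hρ]; linarith
  have hρmono : ∀ k, ρ k < ρ (k + 1) := by
    intro k
    have h1 : r₀ / ((k : ℝ) + 1 + 2) < r₀ / ((k : ℝ) + 2) := by
      apply div_lt_div_of_pos_left hr₀ (by positivity) (by linarith)
    simp only [hρ]
    push_cast
    linarith
  set Xk : ℕ → Set ℂ := fun k => f^[n] '' Metric.ball c₀ (ρ k) with hXk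
  have hXo : ∀ k, IsOpen (Xk k) := fun k => hfno n _ Metric.isOpen_ball
  have hXmono : ∀ k, Xk k ⊆ Xk (k + 1) := fun k =>
    Set.image_mono (Metric.ball_subset_ball (hρmono k).le)
  have hball : (⋃ k, Metric.ball c₀ (ρ k)) = D := by
    rw [hD]
    ext y
    simp only [Set.mem_iUnion, Metric.mem_ball]
    constructor
    · rintro ⟨k, hk⟩
      exact lt_trans hk (hρlt k)
    · intro hy
      set ε := r₀ - dist y c₀ with hε
      have hε0 : 0 < ε := by simp only [hε]; linarith
      obtain ⟨k, hk⟩ := exists_nat_gt (r₀ / ε)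
      refine ⟨k, ?_⟩
      have hk2 : r₀ / ((k : ℝ) + 2) < ε := by
        rw [div_lt_iff₀ (by positivity)]
        rw [div_lt_iff₀ hε0] at hk
        nlinarith
      simp only [hρ]
      linarith
  have hUX : (⋃ k, Xk k) = S := by
    simp only [hXk]
    rw [← Set.image_iUnion, hball]
  have hSb : IsBounded S := by
    have hcomp : IsCompact (f^[n] '' Metric.closedBall c₀ r₀) :=
      (isCompact_closedBall c₀ r₀).image (hcont.iterate n)
    refine hcomp.isBounded.subset ?_
    rw [hS, hD]
    exact Set.image_mono Metric.ball_subset_closedBall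
  rw [hV n, hV (n + 1)]
  refine connectedComponentIn_mono c₀ ?_
  intro z hz
  have hz1 : f^[n] z ∈ fill S := hz
  have hz' : f^[n] z ∈ fill (⋃ k, Xk k) := by rw [hUX]; exact hz1
  obtain ⟨k, hk⟩ := fill_iUnion_exhaust hXo hXmono (by rw [hUX]; exact hSb) hz'
  set Ω : Set ℂ := fill (Xk k) with hΩ
  have hXkb : IsBounded (Xk k) := hSb.subset (by rw [← hUX]; exact Set.subset_iUnion Xk k)
  have hΩo : IsOpen Ω := fill_isOpen (hXo k) hXkb
  have hΩb : IsBounded Ω := fill_isBounded hXkb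
  have hbd : ∀ u ∈ closure Ω \ Ω, f u ∈ T := by
    intro u hu
    have h1 : u ∈ closure (Xk k) := closure_fill_diff_subset (hXo k) hu
    have h2 : closure (Xk k) ⊆ f^[n] '' Metric.closedBall c₀ (ρ k) := by
      apply closure_minimal (Set.image_mono Metric.ball_subset_closedBall)
      exact ((isCompact_closedBall c₀ (ρ k)).image (hcont.iterate n)).isClosed
    obtain ⟨y, hy, hyu⟩ := h2 h1
    refine ⟨y, ?_, ?_⟩
    · rw [hD, Metric.mem_ball]
      exact lt_of_le_of_lt (Metric.mem_closedBall.mp hy) (hρlt k)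
    · rw [Function.iterate_succ_apply', hyu]
  have hpush := image_subset_fill hcont hΩb (hfo Ω hΩo) hbd
  show f^[n + 1] z ∈ fill T
  rw [Function.iterate_succ_apply']
  exact hpush ⟨f^[n] z, hk, rfl⟩

end EscapingSmallGrowth
end
end
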